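/- Let G be a bipartite graph and G⃗₁, G⃗₂ two of its orientations. Then G⃗₁ and G⃗₂ are push equivalent if and only if every cycle of G has the same balance in G⃗₁ and G⃗₂, where an oriented even cycle of length 2ℓ is balanced if the number of forward arcs (with respect to either traversal) is congruent to ℓ modulo 2. -/

import Mathlib

open SimpleGraph

namespace Stmt19Aux

variable {V : Type*} {G : SimpleGraph V}

noncomputable def dsum (b : V → V → Bool) {u v : V} (w : G.Walk u v) : ZMod 2 :=
  ((w.darts.filter fun d => b d.toProd.1 d.toProd.2).length : ZMod 2)

@[simp] lemma dsum_nil (b : V → V → Bool) {u : V} : dsum b (Walk.nil : G.Walk u u) = 0 := by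
  simp [dsum]

@[simp] lemma dsum_cons (b : V → V → Bool) {u v w : V} (h : G.Adj u v) (p : G.Walk v w) :
    dsum b (Walk.cons h p) = (if b u v then 1 else 0) + dsum b p := by
  simp only [dsum, Walk.darts_cons, List.filter_cons]
  by_cases hb : b u v <;> simp [hb] <;> ring

@[simp] lemma dsum_append (b : V → V → Bool) {u v w : V} (p : G.Walk u v) (q : G.Walk v w) :
    dsum b (p.append q) = dsum b p + dsum b q := by
  simp [dsum, Walk.darts_append, List.filter_append]

@[simp] lemma dsum_copy (b : V → V → Bool) {u v u' v' : V} (p : G.Walk u v)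
    (hu : u = u') (hv : v = v') : dsum b (p.copy hu hv) = dsum b p := by
  subst hu hv; rfl

lemma dsum_congr {b b' : V → V → Bool} (hb : ∀ u v, G.Adj u v → b u v = b' u v)
    {u v : V} (w : G.Walk u v) : dsum b w = dsum b' w := by
  induction w with
  | nil => simp
  | cons h p ih => rw [dsum_cons, dsum_cons, ih, hb _ _ h]

lemma dsum_reverse {b : V → V → Bool} (hb : ∀ u v, G.Adj u v → b u v = b v u)
    {u v : V} (w : G.Walk u v) : dsum b w.reverse = dsum b w := by
  induction w with
  | nil => simp
  | cons h p ih =>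
    rw [Walk.reverse_cons, dsum_append, ih, dsum_cons, dsum_cons, dsum_nil,
      hb _ _ h.symm]
    ring

lemma dsum_xor (b₁ b₂ : V → V → Bool) {u v : V} (w : G.Walk u v) :
    dsum (fun x y => Bool.xor (b₁ x y) (b₂ x y)) w = dsum b₁ w + dsum b₂ w := by
  induction w with
  | nil => simp
  | cons h p ih =>
    rename_i x y z
    rw [dsum_cons, dsum_cons, dsum_cons, ih]
    by_cases c1 : b₁ x y <;> by_cases c2 : b₂ x y <;>
      simp [c1, c2] <;> ring_nf <;>
      simp [show (2 : ZMod 2) = 0 from rfl] <;> try ring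

lemma dsum_pot (s : V → Bool) {u v : V} (w : G.Walk u v) :
    dsum (fun x y => Bool.xor (s x) (s y)) w
      = (if s u then 1 else 0) + (if s v then 1 else 0) := by
  induction w with
  | nil =>
    rename_i x
    by_cases c : s x <;> simp [c] <;> decide
  | cons h p ih =>
    rename_i x y z
    rw [dsum_cons, ih]
    by_cases c1 : s x <;> by_cases c2 : s y <;> by_cases c3 : s z <;>
      simp [c1, c2, c3] <;> ring_nf <;>
      simp [show (2 : ZMod 2) = 0 from rfl] <;> try ring

lemma dsum_perm (b : V → V → Bool) {u v u' v' : V} {w : G.Walk u v} {w' : G.Walk u' v'}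
    (h : List.Perm w.darts w'.darts) : dsum b w = dsum b w' := by
  simp only [dsum]
  rw [List.Perm.length_eq (List.Perm.filter _ h)]

end Stmt19Aux

namespace Stmt19Aux

lemma closed_even {V : Type*} {G : SimpleGraph V} (f : V → V → Bool)
    (hf : ∀ u v, G.Adj u v → f u v = f v u)
    (hcyc : ∀ (v : V) (w : G.Walk v v), w.IsCycle → dsum f w = 0) :
    ∀ (n : ℕ) (v : V) (w : G.Walk v v), w.length = n → dsum f w = 0 := by
  classical
  intro n
  induction n using Nat.strong_induction_on with
  | _ n IH =>
    have key : ∀ (x : V) (w' : G.Walk x x), w'.length = n →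
        2 ≤ w'.support.tail.count x → dsum f w' = 0 := by
      intro x w' hlen hcnt
      cases w' with
      | nil => simp
      | cons h' p' =>
        rename_i y'
        rw [Walk.support_cons, List.tail_cons] at hcnt
        have hxp : x ∈ p'.support := List.count_pos_iff.mp (by omega)
        have hspec : (p'.takeUntil x hxp).append (p'.dropUntil x hxp) = p' :=
          p'.take_spec hxp
        set q := p'.takeUntil x hxp with hqdef
        set r := p'.dropUntil x hxp with hrdef
        have hq1 : q.support.count x = 1 := p'.count_support_takeUntil_eq_one hxp
        have hsupp : p'.support = q.support ++ r.support.tail := by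
          rw [← hspec, Walk.support_append]
        have hrcnt : 1 ≤ r.support.tail.count x := by
          have := hcnt
          rw [hsupp, List.count_append, hq1] at this
          omega
        have hrlen : 1 ≤ r.length := by
          have htne : r.support.tail ≠ [] := by
            intro hE; rw [hE] at hrcnt; simp at hrcnt
          have h1 : 0 < r.support.tail.length := List.length_pos_iff.mpr htne
          rw [List.length_tail, Walk.length_support] at h1
          omega
        have hlsum : q.length + r.length = p'.length := by
          have := congrArg Walk.length hspec
          rwa [Walk.length_append] at this
        have hlenc : p'.length + 1 = n := by
          rw [← hlen, Walk.length_cons]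
        have e1 : dsum f (Walk.cons h' q) = 0 :=
          IH (q.length + 1) (by omega) x (Walk.cons h' q) (by rw [Walk.length_cons])
        have e2 : dsum f r = 0 := IH r.length (by omega) x r rfl
        rw [dsum_cons] at e1
        rw [← hspec, dsum_cons, dsum_append, e2, add_zero]
        exact e1
    intro v w hw
    cases w with
    | nil => simp
    | cons h p =>
      rename_i y
      by_cases hnd : p.support.Nodup
      · have hp : p.IsPath := (Walk.isPath_def p).mpr hnd
        by_cases he : s(v, y) ∈ p.edges
        · cases p with
          | nil => simp at he
          | cons h₂ p₂ =>
            rename_i z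
            rw [Walk.edges_cons, List.mem_cons] at he
            rcases he with he | he
            · have hvz : v = z := by
                have hvy : v ≠ y := G.ne_of_adj h
                rcases Sym2.eq_iff.mp he with ⟨h1, _⟩ | ⟨h1, _⟩
                · exact absurd h1 hvy
                · exact h1
              subst hvz
              have hp₂ : p₂.IsPath := hp.of_cons
              have hnil : p₂ = Walk.nil := by
                have := SimpleGraph.Path.loop_eq (⟨p₂, hp₂⟩ : G.Path v v)
                exact Subtype.ext_iff.mp this
              subst hnil
              rw [dsum_cons, dsum_cons, dsum_nil, add_zero, hf v y h]
              by_cases c : f y v <;> simp [c] <;> decide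
            · exfalso
              have hy : y ∈ p₂.support := Walk.snd_mem_support_of_mem_edges p₂ he
              rw [Walk.isPath_def, Walk.support_cons] at hp
              exact (List.nodup_cons.mp hp).1 hy
        · exact hcyc v (Walk.cons h p) ((Walk.cons_isCycle_iff p h).mpr ⟨hp, he⟩)
      · obtain ⟨x, hxdup⟩ := List.exists_duplicate_iff_not_nodup.mpr hnd
        have hcount : 2 ≤ p.support.count x := List.duplicate_iff_two_le_count.mp hxdup
        have hxw : x ∈ (Walk.cons h p).support := by
          rw [Walk.support_cons]
          exact List.mem_cons_of_mem _ hxdup.mem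
        have hperm : List.Perm ((Walk.cons h p).rotate (h := hxw)).darts (Walk.cons h p).darts :=
          ((Walk.cons h p).rotate_darts (h := hxw)).perm
        have hlen' : ((Walk.cons h p).rotate (h := hxw)).length = n := by
          have hl := hperm.length_eq
          rw [Walk.length_darts, Walk.length_darts] at hl
          rw [hl, hw]
        have hcnt' : 2 ≤ ((Walk.cons h p).rotate (h := hxw)).support.tail.count x := by
          rw [(((Walk.cons h p).support_rotate (h := hxw)).perm).count_eq]
          rw [Walk.support_cons, List.tail_cons]
          exact hcount
        rw [dsum_perm f hperm.symm]
        exact key x _ hlen' hcnt'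

end Stmt19Aux

/-- Two orientations of a bipartite graph `G` (encoded by `o : V → V → Bool`, where on
adjacent pairs `o u v = true` means the arc is directed `u → v`) are push equivalent iff
every cycle of `G` has the same balance in both: an oriented even cycle of length `2ℓ`
is balanced iff its number of forward arcs is congruent to `ℓ` modulo `2`. -/
theorem stmt19 {V : Type*} (G : SimpleGraph V) (p : V → Bool)
    (hp : ∀ u v, G.Adj u v → p u ≠ p v)
    (o₁ o₂ : V → V → Bool)
    (h₁ : ∀ u v, G.Adj u v → o₁ u v = !o₁ v u)
    (h₂ : ∀ u v, G.Adj u v → o₂ u v = !o₂ v u) :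
    (∃ s : V → Bool, ∀ u v, G.Adj u v →
        Bool.xor (o₁ u v) (Bool.xor (s u) (s v)) = o₂ u v)
    ↔ ∀ (v : V) (w : G.Walk v v), w.IsCycle →
        ((w.darts.filter fun d => o₁ d.toProd.1 d.toProd.2).length ≡ w.length / 2 [MOD 2]
          ↔ (w.darts.filter fun d => o₂ d.toProd.1 d.toProd.2).length ≡ w.length / 2 [MOD 2]) := by
  classical
  have ind_inj : ∀ a b : Bool,
      ((if a then (1 : ZMod 2) else 0) = if b then 1 else 0) → a = b := by decide
  have ind_xor : ∀ a b : Bool,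
      (if Bool.xor a b then (1 : ZMod 2) else 0)
        = (if a then 1 else 0) + (if b then 1 else 0) := by decide
  constructor
  · rintro ⟨s, hs⟩ v w hwc
    have hd : Stmt19Aux.dsum o₂ w = Stmt19Aux.dsum o₁ w := by
      have hc : Stmt19Aux.dsum o₂ w
          = Stmt19Aux.dsum (fun x y => Bool.xor (o₁ x y) (Bool.xor (s x) (s y))) w :=
        Stmt19Aux.dsum_congr (fun x y a => (hs x y a).symm) w
      rw [hc, show (fun x y => Bool.xor (o₁ x y) (Bool.xor (s x) (s y)))
            = fun x y => Bool.xor (o₁ x y) ((fun x y => Bool.xor (s x) (s y)) x y) from rfl,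
          Stmt19Aux.dsum_xor, Stmt19Aux.dsum_pot]
      by_cases c : s v <;> simp [c] <;> ring_nf <;>
        simp [show (2 : ZMod 2) = 0 from rfl]
    rw [← ZMod.natCast_eq_natCast_iff, ← ZMod.natCast_eq_natCast_iff]
    show Stmt19Aux.dsum o₁ w = _ ↔ Stmt19Aux.dsum o₂ w = _
    rw [hd]
  · intro hbal
    set f : V → V → Bool := fun x y => Bool.xor (o₁ x y) (o₂ x y) with hfdef
    have hf : ∀ u v, G.Adj u v → f u v = f v u := by
      intro u v a
      simp only [hfdef]
      rw [h₁ u v a, h₂ u v a]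
      cases o₁ v u <;> cases o₂ v u <;> rfl
    have hcyc : ∀ (v : V) (w : G.Walk v v), w.IsCycle → Stmt19Aux.dsum f w = 0 := by
      intro v w hwc
      have hiff := hbal v w hwc
      rw [← ZMod.natCast_eq_natCast_iff, ← ZMod.natCast_eq_natCast_iff] at hiff
      have heq : Stmt19Aux.dsum o₁ w = Stmt19Aux.dsum o₂ w := by
        revert hiff
        show (Stmt19Aux.dsum o₁ w = _ ↔ Stmt19Aux.dsum o₂ w = _) → _
        have : ∀ a b c : ZMod 2, (a = c ↔ b = c) → a = b := by decide
        exact this _ _ _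
      rw [show f = fun x y => Bool.xor (o₁ x y) (o₂ x y) from rfl, Stmt19Aux.dsum_xor, heq]
      have : ∀ a : ZMod 2, a + a = 0 := by decide
      exact this _
    have H : ∀ (v : V) (w : G.Walk v v), Stmt19Aux.dsum f w = 0 := fun v w =>
      Stmt19Aux.closed_even f hf hcyc w.length v w rfl
    -- construct the potential s
    let root : V → V := fun v => Quot.out (G.connectedComponentMk v)
    have hmk : ∀ v, G.connectedComponentMk (root v) = G.connectedComponentMk v :=
      fun v => Quot.out_eq _
    have hreach : ∀ v, G.Reachable (root v) v := fun v =>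
      SimpleGraph.ConnectedComponent.eq.mp (hmk v)
    let wk : ∀ v, G.Walk (root v) v := fun v => Classical.choice (hreach v)
    refine ⟨fun v => decide (Stmt19Aux.dsum f (wk v) = 1), ?_⟩
    intro u v a
    set s : V → Bool := fun v => decide (Stmt19Aux.dsum f (wk v) = 1) with hsdef
    have hind : ∀ x, (if s x then (1 : ZMod 2) else 0) = Stmt19Aux.dsum f (wk x) := by
      intro x
      simp only [hsdef]
      by_cases c : Stmt19Aux.dsum f (wk x) = 1
      · simp [c]
      · have c0 : Stmt19Aux.dsum f (wk x) = 0 := by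
          have : ∀ a : ZMod 2, a ≠ 1 → a = 0 := by decide
          exact this _ c
        simp [c, c0]
    have e : root v = root u := by
      have : G.connectedComponentMk v = G.connectedComponentMk u :=
        SimpleGraph.ConnectedComponent.eq.mpr (SimpleGraph.Adj.reachable (a.symm))
      exact congrArg Quot.out this
    have hc : Stmt19Aux.dsum f ((wk u).append
        (Walk.cons a ((wk v).copy e rfl).reverse)) = 0 := H (root u) _
    rw [Stmt19Aux.dsum_append, Stmt19Aux.dsum_cons,
      Stmt19Aux.dsum_reverse hf, Stmt19Aux.dsum_copy] at hc
    -- hc : dsum (wk u) + (ind (f u v) + dsum (wk v)) = 0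
    have key : Bool.xor (s u) (s v) = f u v := by
      apply ind_inj
      rw [ind_xor, hind u, hind v]
      have : ∀ a b c : ZMod 2, a + (b + c) = 0 → a + c = b := by decide
      exact this _ _ _ hc
    rw [show f u v = Bool.xor (o₁ u v) (o₂ u v) from rfl] at key
    rw [key]
    cases o₁ u v <;> cases o₂ u v <;> rfl
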